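/- Let U_1,...,U_N be independent random variables, each uniformly distributed on [0,1] (i.e., distributed according to the N-fold product of the uniform probability measure on [0,1]). Let ε ∈ (0,1), β ∈ (0,1), and let k < N be a natural number satisfying ∑_{i=0}^{k} C(N,i) · ε^i · (1-ε)^{N-i} ≤ β. Then the (N-k)-th order statistic U_(N-k) (the (N-k)-th smallest of U_1,...,U_N) satisfies P(U_(N-k) > 1-ε) ≥ 1-β. -/

import Mathlib

open MeasureTheory
open Finset

/-- Uniform-sample form of the conformal calibration guarantee: for `N` i.i.d. uniform random
variables on `[0,1]`, if `k < N` satisfies `∑_{i=0}^{k} C(N,i) ε^i (1-ε)^{N-i} ≤ β`, then the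
`(N-k)`-th order statistic exceeds `1-ε` with probability at least `1-β`. -/
theorem uniform_orderStat_calibration (N : ℕ) (ε β : ℝ)
    (hε : ε ∈ Set.Ioo (0 : ℝ) 1) (hβ : β ∈ Set.Ioo (0 : ℝ) 1)
    (k : ℕ) (hk : k < N)
    (hsum : ∑ i ∈ Finset.range (k + 1), (N.choose i : ℝ) * ε ^ i * (1 - ε) ^ (N - i) ≤ β) :
    ENNReal.ofReal (1 - β) ≤
      (Measure.pi fun _ : Fin N => volume.restrict (Set.Icc (0 : ℝ) 1))
        {ω | 1 - ε < ω (Tuple.sort ω ⟨N - k - 1, by omega⟩)} := by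
  obtain ⟨hε0, hε1⟩ := hε
  obtain ⟨hβ0, hβ1⟩ := hβ
  set t : ℝ := 1 - ε with ht
  have ht0 : 0 < t := by simp only [ht]; linarith
  have ht1 : t < 1 := by simp only [ht]; linarith
  set μ : Measure ℝ := volume.restrict (Set.Icc (0:ℝ) 1) with hμ
  haveI hprob : IsProbabilityMeasure μ := ⟨by
    rw [hμ, Measure.restrict_apply_univ, Real.volume_Icc]; norm_num⟩
  set m : ℕ := N - k with hm
  have hm1 : 1 ≤ m := by omega
  -- Step 1: rewrite the event in terms of counts
  have hcount : ∀ ω : Fin N → ℝ,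
      (1 - ε < ω (Tuple.sort ω ⟨N - k - 1, by omega⟩)) ↔
      (univ.filter (fun i => ω i ≤ t)).card < m := by
    intro ω
    have hmono := Tuple.monotone_sort ω
    have hiff := Tuple.lt_card_le_iff_apply_le_of_monotone (f := ω ∘ Tuple.sort ω) (a := t)
      (j := ⟨N - k - 1, by omega⟩) hmono
    rw [← Fintype.card_subtype] at hiff
    have hcard : Fintype.card {i // (ω ∘ Tuple.sort ω) i ≤ t}
        = (univ.filter (fun i => ω i ≤ t)).card := by
      have e : {i // (ω ∘ ⇑(Tuple.sort ω)) i ≤ t} ≃ {i // ω i ≤ t} :=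
        Equiv.subtypeEquiv (Tuple.sort ω) (fun i => Iff.rfl)
      rw [Fintype.card_congr e, Fintype.card_subtype]
    rw [hcard] at hiff
    simp only [Function.comp_apply] at hiff
    constructor
    · intro h
      have : ¬ (ω (Tuple.sort ω ⟨N - k - 1, by omega⟩) ≤ t) := not_le.mpr h
      rw [← hiff] at this
      simp only [not_lt] at this
      omega
    · intro h
      rw [← not_le]
      intro hle
      have := hiff.mpr hle
      omega
  -- Step 2: the decomposition sets
  set A : Finset (Fin N) → Set (Fin N → ℝ) :=
    fun S => Set.pi Set.univ (fun i => if i ∈ S then Set.Iic t else Set.Ioi t) with hA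
  set P : Finset (Finset (Fin N)) := univ.powerset.filter (fun S => m ≤ S.card) with hP
  have hAmeas : ∀ S, MeasurableSet (A S) := by
    intro S
    refine MeasurableSet.univ_pi (fun i => ?_)
    by_cases h : i ∈ S <;> simp [hA, h, measurableSet_Iic, measurableSet_Ioi]
  have hEc : {ω : Fin N → ℝ | m ≤ (univ.filter (fun i => ω i ≤ t)).card}
      = ⋃ S ∈ P, A S := by
    ext ω
    simp only [Set.mem_setOf_eq, Set.mem_iUnion, hP, mem_filter, mem_powerset, hA,
      Set.mem_pi, Set.mem_univ, forall_true_left, exists_prop]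
    constructor
    · intro h
      refine ⟨univ.filter (fun i => ω i ≤ t), ⟨subset_univ _, h⟩, fun i => ?_⟩
      by_cases hi : ω i ≤ t
      · simp [mem_filter, hi]
      · simp [mem_filter, hi, lt_of_not_ge hi]
    · rintro ⟨S, ⟨-, hS⟩, hω⟩
      refine hS.trans (Finset.card_le_card fun i hi => ?_)
      have h2 := hω i
      simp only [hi, if_true, Set.mem_Iic] at h2
      simp [mem_filter, h2]
  -- Step 3: measure of each piece
  have hIic : μ (Set.Iic t) = ENNReal.ofReal t := by
    rw [hμ, Measure.restrict_apply measurableSet_Iic]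
    have : Set.Iic t ∩ Set.Icc 0 1 = Set.Icc 0 t := by
      ext x
      simp only [Set.mem_inter_iff, Set.mem_Iic, Set.mem_Icc]
      constructor
      · rintro ⟨h1, h2, h3⟩; exact ⟨h2, h1⟩
      · rintro ⟨h1, h2⟩; exact ⟨h2, h1, by linarith⟩
    rw [this, Real.volume_Icc, sub_zero]
  have hIoi : μ (Set.Ioi t) = ENNReal.ofReal ε := by
    rw [hμ, Measure.restrict_apply measurableSet_Ioi]
    have : Set.Ioi t ∩ Set.Icc 0 1 = Set.Ioc t 1 := by
      ext x
      simp only [Set.mem_inter_iff, Set.mem_Ioi, Set.mem_Icc, Set.mem_Ioc]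
      constructor
      · rintro ⟨h1, h2, h3⟩; exact ⟨h1, h3⟩
      · rintro ⟨h1, h2⟩; exact ⟨h1, by linarith, h2⟩
    rw [this, Real.volume_Ioc]
    congr 1
    simp only [ht]; ring
  have hAmeasure : ∀ S : Finset (Fin N),
      Measure.pi (fun _ : Fin N => μ) (A S)
        = ENNReal.ofReal t ^ S.card * ENNReal.ofReal ε ^ (N - S.card) := by
    intro S
    rw [hA, Measure.pi_pi]
    simp only [apply_ite μ, hIic, hIoi]
    rw [Finset.prod_ite, Finset.prod_const, Finset.prod_const]
    congr 1
    · congr 1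
      rw [Finset.filter_mem_eq_inter, Finset.univ_inter]
    · congr 1
      have : (univ.filter (fun i => i ∉ S)) = Sᶜ := by
        ext i; simp [mem_compl]
      rw [this, Finset.card_compl, Fintype.card_fin]
  -- Step 4: sum bound
  have hPsum : ∑ S ∈ P, ENNReal.ofReal t ^ S.card * ENNReal.ofReal ε ^ (N - S.card)
      ≤ ENNReal.ofReal β := by
    have hPdecomp : P = (Finset.Icc m N).biUnion (fun j => powersetCard j univ) := by
      ext S
      simp only [hP, mem_filter, mem_powerset, Finset.mem_biUnion, Finset.mem_Icc,
        mem_powersetCard]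
      constructor
      · rintro ⟨h1, h2⟩
        exact ⟨S.card, ⟨h2, (card_le_card (subset_univ S)).trans_eq (by simp)⟩, h1, rfl⟩
      · rintro ⟨j, ⟨hj1, hj2⟩, h1, h2⟩
        exact ⟨h1, h2 ▸ hj1⟩
    rw [hPdecomp, Finset.sum_biUnion]
    · have hinner : ∀ j ∈ Finset.Icc m N,
          (∑ S ∈ powersetCard j (univ : Finset (Fin N)),
            ENNReal.ofReal t ^ S.card * ENNReal.ofReal ε ^ (N - S.card))
          = ENNReal.ofReal ((N.choose j : ℝ) * (t ^ j * ε ^ (N - j))) := by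
        intro j hj
        rw [Finset.sum_congr rfl (fun S hS => ?_), Finset.sum_const,
          Finset.card_powersetCard, Finset.card_univ, Fintype.card_fin]
        · rw [nsmul_eq_mul, ENNReal.ofReal_mul (by positivity),
            ENNReal.ofReal_natCast, ENNReal.ofReal_mul (by positivity),
            ENNReal.ofReal_pow ht0.le, ENNReal.ofReal_pow hε0.le]
        · rw [(mem_powersetCard.mp hS).2]
      rw [Finset.sum_congr rfl hinner, ← ENNReal.ofReal_sum_of_nonneg
        (fun j _ => by positivity)]
      apply ENNReal.ofReal_le_ofReal
      refine le_trans (le_of_eq ?_) hsum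
      refine Finset.sum_nbij' (fun j => N - j) (fun i => N - i) ?_ ?_ ?_ ?_ ?_
      · intro j hj
        simp only [Finset.mem_Icc] at hj
        simp only [Finset.mem_range]
        omega
      · intro i hi
        simp only [Finset.mem_range] at hi
        simp only [Finset.mem_Icc]
        omega
      · intro j hj
        simp only [Finset.mem_Icc] at hj
        omega
      · intro i hi
        simp only [Finset.mem_range] at hi
        omega
      · intro j hj
        simp only [Finset.mem_Icc] at hj
        have h1 : N.choose (N - j) = N.choose j := Nat.choose_symm hj.2
        have h2 : N - (N - j) = j := by omega
        rw [h1, h2]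
        ring
    · exact fun x _ y _ hxy =>
        Finset.disjoint_coe.mp (by
          simpa using (Finset.pairwise_disjoint_powersetCard (univ : Finset (Fin N)) hxy))
  -- Step 5: assemble
  set μN := Measure.pi (fun _ : Fin N => μ) with hμN
  haveI : IsProbabilityMeasure μN := by rw [hμN]; infer_instance
  have hEcmeas : MeasurableSet {ω : Fin N → ℝ | m ≤ (univ.filter (fun i => ω i ≤ t)).card} := by
    rw [hEc]
    exact P.measurableSet_biUnion (fun S _ => hAmeas S)
  have hEcle : μN {ω : Fin N → ℝ | m ≤ (univ.filter (fun i => ω i ≤ t)).card}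
      ≤ ENNReal.ofReal β := by
    rw [hEc]
    calc μN (⋃ S ∈ P, A S) ≤ ∑ S ∈ P, μN (A S) := measure_biUnion_finset_le P A
    _ = ∑ S ∈ P, ENNReal.ofReal t ^ S.card * ENNReal.ofReal ε ^ (N - S.card) :=
        Finset.sum_congr rfl (fun S _ => hAmeasure S)
    _ ≤ ENNReal.ofReal β := hPsum
  have hEeq : {ω : Fin N → ℝ | 1 - ε < ω (Tuple.sort ω ⟨N - k - 1, by omega⟩)}
      = {ω : Fin N → ℝ | m ≤ (univ.filter (fun i => ω i ≤ t)).card}ᶜ := by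
    ext ω
    simp only [Set.mem_setOf_eq, Set.mem_compl_iff, not_le, hcount ω]
  show ENNReal.ofReal (1 - β) ≤ μN _
  rw [hEeq, measure_compl hEcmeas (measure_ne_top _ _), measure_univ]
  calc ENNReal.ofReal (1 - β) = 1 - ENNReal.ofReal β := by
        rw [ENNReal.ofReal_sub 1 hβ0.le, ENNReal.ofReal_one]
    _ ≤ 1 - μN {ω : Fin N → ℝ | m ≤ (univ.filter (fun i => ω i ≤ t)).card} :=
        tsub_le_tsub_left hEcle 1
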